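/- With δ-operators as above ([∂₁,∂₂] = H(∂₂−∂₁), δ_i⁽ᵏ⁾(u) = ∂_i(u) − kHu), define à_{ijk} = δ_k⁽²⁾ ∘ δ_j⁽¹⁾ ∘ δ_i⁽⁰⁾(a) for a smooth function a. Then à_{ij k} is symmetric in (i,j), and setting a₁₁₂ = (à₁₁₂ + à₁₂₁ + à₂₁₁)/3 and K = ∂₁H − ∂₂H, a₁ = ∂₁a, one has à₁₁₂ = a₁₁₂ + (2K/3)·a₁ and à₁₂₁ = à₂₁₁ = a₁₁₂ − (K/3)·a₁. -/

import Mathlib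

noncomputable def vd (X : ℝ × ℝ → ℝ × ℝ) (g : ℝ × ℝ → ℝ) (z : ℝ × ℝ) : ℝ :=
  fderiv ℝ g z (X z)

noncomputable def delk (X : ℝ × ℝ → ℝ × ℝ) (H : ℝ × ℝ → ℝ) (k : ℕ)
    (u : ℝ × ℝ → ℝ) (z : ℝ × ℝ) : ℝ :=
  vd X u z - (k : ℝ) * H z * u z

/-- `Ã_{ijk} = δ_k⁽²⁾ ∘ δ_j⁽¹⁾ ∘ δ_i⁽⁰⁾(a)`. -/
noncomputable def atil (X1 X2 : ℝ × ℝ → ℝ × ℝ) (H a : ℝ × ℝ → ℝ)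
    (i j k : Fin 2) (z : ℝ × ℝ) : ℝ :=
  let Xf : Fin 2 → ℝ × ℝ → ℝ × ℝ := ![X1, X2]
  delk (Xf k) H 2 (delk (Xf j) H 1 (delk (Xf i) H 0 a)) z

section aux
variable {U : Set (ℝ × ℝ)} {X X1 X2 : ℝ × ℝ → ℝ × ℝ} {H u v : ℝ × ℝ → ℝ} {z : ℝ × ℝ}

lemma diffAt_of_sm (hU : IsOpen U) (hu : ContDiffOn ℝ (⊤ : ℕ∞) u U) (hz : z ∈ U) :
    DifferentiableAt ℝ u z :=
  (hu.contDiffAt (hU.mem_nhds hz)).differentiableAt (by simp)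

lemma smoothOn_vd (hU : IsOpen U) (hX : ContDiffOn ℝ (⊤ : ℕ∞) X U)
    (hu : ContDiffOn ℝ (⊤ : ℕ∞) u U) : ContDiffOn ℝ (⊤ : ℕ∞) (vd X u) U :=
  (hu.fderiv_of_isOpen hU (by exact_mod_cast le_top)).clm_apply hX

lemma smoothOn_delk (hU : IsOpen U) (hX : ContDiffOn ℝ (⊤ : ℕ∞) X U)
    (hH : ContDiffOn ℝ (⊤ : ℕ∞) H U) (hu : ContDiffOn ℝ (⊤ : ℕ∞) u U) (k : ℕ) :
    ContDiffOn ℝ (⊤ : ℕ∞) (delk X H k u) U :=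
  (smoothOn_vd hU hX hu).sub ((contDiffOn_const.mul hH).mul hu)

lemma vd_sub (X : ℝ × ℝ → ℝ × ℝ) (hu : DifferentiableAt ℝ u z) (hv : DifferentiableAt ℝ v z) :
    vd X (fun w => u w - v w) z = vd X u z - vd X v z := by
  simp [vd, fderiv_fun_sub hu hv]

lemma vd_const_mul (X : ℝ × ℝ → ℝ × ℝ) (c : ℝ) (hu : DifferentiableAt ℝ u z) :
    vd X (fun w => c * u w) z = c * vd X u z := by
  simp [vd, fderiv_const_mul hu]

lemma vd_mul (X : ℝ × ℝ → ℝ × ℝ) (hu : DifferentiableAt ℝ u z) (hv : DifferentiableAt ℝ v z) :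
    vd X (fun w => u w * v w) z = vd X u z * v z + u z * vd X v z := by
  simp [vd, fderiv_fun_mul hu hv]; ring

lemma vd_congrOn (X : ℝ × ℝ → ℝ × ℝ) (hU : IsOpen U) (hz : z ∈ U)
    (h : ∀ w ∈ U, u w = v w) : vd X u z = vd X v z := by
  have he : u =ᶠ[nhds z] v := Filter.eventually_iff_exists_mem.2 ⟨U, hU.mem_nhds hz, h⟩
  unfold vd
  rw [he.fderiv_eq]

lemma delk_congrOn (X : ℝ × ℝ → ℝ × ℝ) (hU : IsOpen U) (hz : z ∈ U)
    (h : ∀ w ∈ U, u w = v w) (k : ℕ) : delk X H k u z = delk X H k v z := by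
  simp only [delk, h z hz, vd_congrOn X hU hz h]

lemma comm_key (hU : IsOpen U) (hX1 : ContDiffOn ℝ (⊤ : ℕ∞) X1 U)
    (hX2 : ContDiffOn ℝ (⊤ : ℕ∞) X2 U) (hH : ContDiffOn ℝ (⊤ : ℕ∞) H U)
    (hbr : ∀ g : ℝ × ℝ → ℝ, ContDiffOn ℝ (⊤ : ℕ∞) g U → ∀ z ∈ U,
      vd X1 (vd X2 g) z - vd X2 (vd X1 g) z = H z * (vd X2 g z - vd X1 g z))
    (s : ℕ) (hu : ContDiffOn ℝ (⊤ : ℕ∞) u U) (hz : z ∈ U) :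
    delk X2 H (s + 1) (delk X1 H s u) z - delk X1 H (s + 1) (delk X2 H s u) z
      = (s : ℝ) * (vd X1 H z - vd X2 H z) * u z := by
  have hHz := diffAt_of_sm hU hH hz
  have huz := diffAt_of_sm hU hu hz
  have hD1z := diffAt_of_sm hU (smoothOn_vd hU hX1 hu) hz
  have hD2z := diffAt_of_sm hU (smoothOn_vd hU hX2 hu) hz
  have h1 : delk X1 H s u = fun w => vd X1 u w - (s : ℝ) * (H w * u w) := by
    funext w; simp [delk, mul_assoc]
  have h2 : delk X2 H s u = fun w => vd X2 u w - (s : ℝ) * (H w * u w) := by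
    funext w; simp [delk, mul_assoc]
  have e1 : vd X2 (delk X1 H s u) z
      = vd X2 (vd X1 u) z - (s : ℝ) * (vd X2 H z * u z + H z * vd X2 u z) := by
    rw [h1, vd_sub X2 hD1z ((hHz.fun_mul huz).const_mul _),
      vd_const_mul X2 _ (hHz.fun_mul huz), vd_mul X2 hHz huz]
  have e2 : vd X1 (delk X2 H s u) z
      = vd X1 (vd X2 u) z - (s : ℝ) * (vd X1 H z * u z + H z * vd X1 u z) := by
    rw [h2, vd_sub X1 hD2z ((hHz.fun_mul huz).const_mul _),
      vd_const_mul X1 _ (hHz.fun_mul huz), vd_mul X1 hHz huz]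
  simp only [delk] at e1 e2 ⊢
  rw [e1, e2]
  push_cast
  linear_combination -(hbr u hu z hz)

end aux

/-- `Ã_{ijk}` is symmetric in `(i,j)`, and with
`a₁₁₂ = (Ã₁₁₂ + Ã₁₂₁ + Ã₂₁₁)/3`, `K = ∂₁H - ∂₂H`, `a₁ = ∂₁a`, one has
`Ã₁₁₂ = a₁₁₂ + (2K/3) a₁` and `Ã₁₂₁ = Ã₂₁₁ = a₁₁₂ - (K/3) a₁`. -/
theorem stmt_16 (U : Set (ℝ × ℝ)) (hU : IsOpen U)
    (X1 X2 : ℝ × ℝ → ℝ × ℝ) (H a : ℝ × ℝ → ℝ)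
    (hX1 : ContDiffOn ℝ (⊤ : ℕ∞) X1 U) (hX2 : ContDiffOn ℝ (⊤ : ℕ∞) X2 U)
    (hH : ContDiffOn ℝ (⊤ : ℕ∞) H U) (ha : ContDiffOn ℝ (⊤ : ℕ∞) a U)
    -- `[∂₁, ∂₂] = H (∂₂ - ∂₁)`
    (hbr : ∀ g : ℝ × ℝ → ℝ, ContDiffOn ℝ (⊤ : ℕ∞) g U → ∀ z ∈ U,
      vd X1 (vd X2 g) z - vd X2 (vd X1 g) z = H z * (vd X2 g z - vd X1 g z)) :
    (∀ i j k : Fin 2, ∀ z ∈ U,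
      atil X1 X2 H a i j k z = atil X1 X2 H a j i k z) ∧
    (∀ z ∈ U,
      atil X1 X2 H a 0 0 1 z =
        (atil X1 X2 H a 0 0 1 z + atil X1 X2 H a 0 1 0 z + atil X1 X2 H a 1 0 0 z) / 3 +
          (2 * (vd X1 H z - vd X2 H z) / 3) * vd X1 a z) ∧
    (∀ z ∈ U,
      atil X1 X2 H a 0 1 0 z =
        (atil X1 X2 H a 0 0 1 z + atil X1 X2 H a 0 1 0 z + atil X1 X2 H a 1 0 0 z) / 3 -
          ((vd X1 H z - vd X2 H z) / 3) * vd X1 a z ∧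
      atil X1 X2 H a 1 0 0 z =
        (atil X1 X2 H a 0 0 1 z + atil X1 X2 H a 0 1 0 z + atil X1 X2 H a 1 0 0 z) / 3 -
          ((vd X1 H z - vd X2 H z) / 3) * vd X1 a z) := by
  -- the s = 0 commutator: the inner `δ¹ ∘ δ⁰` operators commute
  have hswap0 : ∀ w ∈ U, delk X2 H 1 (delk X1 H 0 a) w = delk X1 H 1 (delk X2 H 0 a) w := by
    intro w hw
    have h := comm_key hU hX1 hX2 hH hbr 0 ha hw
    norm_num at h
    linarith
  have hsym : ∀ i j k : Fin 2, ∀ z ∈ U,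
      atil X1 X2 H a i j k z = atil X1 X2 H a j i k z := by
    intro i j k z hz
    fin_cases i <;> fin_cases j <;> fin_cases k <;>
      simp only [atil, Matrix.cons_val_zero, Matrix.cons_val_one, Matrix.head_cons, Fin.isValue] <;>
      first
        | rfl
        | exact delk_congrOn _ hU hz hswap0 2
        | exact delk_congrOn _ hU hz (fun w hw => (hswap0 w hw).symm) 2
  refine ⟨hsym, ?_, ?_⟩ <;> intro z hz <;>
  · have hb : ContDiffOn ℝ (⊤ : ℕ∞) (delk X1 H 0 a) U := smoothOn_delk hU hX1 hH ha 0
    have h1 := comm_key hU hX1 hX2 hH hbr 1 hb hz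
    norm_num at h1
    have hbz : delk X1 H 0 a z = vd X1 a z := by simp [delk]
    rw [hbz] at h1
    have hKa : atil X1 X2 H a 0 0 1 z - atil X1 X2 H a 0 1 0 z
        = (vd X1 H z - vd X2 H z) * vd X1 a z := by
      simp only [atil, Matrix.cons_val_zero, Matrix.cons_val_one, Matrix.head_cons, Fin.isValue]
      linarith
    have hC : atil X1 X2 H a 1 0 0 z = atil X1 X2 H a 0 1 0 z := hsym 1 0 0 z hz
    first
      | linear_combination (2/3 : ℝ) * hKa - (1/3 : ℝ) * hC
      | exact ⟨by linear_combination (-1/3 : ℝ) * hKa - (1/3 : ℝ) * hC,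
          by linear_combination (-1/3 : ℝ) * hKa + (2/3 : ℝ) * hC⟩
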